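/- Let 𝒜 be a finite set, Δ > 0, and consider Bernoulli bandit environments. For the base environment ν with μ_ν(1) = 1/2 + Δ and μ_ν(a) = 1/2 for a ≠ 1, and for each a₀ ≠ 1 an alternative ν^{a₀} with μ_{ν^{a₀}}(1) = 1/2 + Δ, μ_{ν^{a₀}}(a₀) = 1/2 + 2Δ, and μ_{ν^{a₀}}(a) = 1/2 for a ∉ {1, a₀}: for any T-round policy π, R_T(ν,π) + R_T(ν^{a₀},π) ≥ (TΔ/2)·P_{ν,π}[N_T(1) ≤ T/2] + (TΔ/2)·P_{ν^{a₀},π}[N_T(1) > T/2]. -/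

import Mathlib

open Finset

variable {α : Type*}

/-- The probability of a `T`-round history `h` under per-action observation pmfs `ν`
and history-dependent policy `π`. -/
def histProb [Fintype α] (T : ℕ)
    (π : (t : ℕ) → (Fin t → α × Bool) → α → ℝ) (ν : α → Bool → ℝ)
    (h : Fin T → α × Bool) : ℝ :=
  ∏ t : Fin T,
    π t.1 (fun s : Fin t.1 => h ⟨s.1, s.2.trans t.2⟩) (h t).1 * ν (h t).1 (h t).2

/-- The number of rounds among the `T`-round history `h` on which action `a` is played. -/
def numPlays [Fintype α] [DecidableEq α] (T : ℕ) (h : Fin T → α × Bool) (a : α) : ℕ :=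
  (Finset.univ.filter fun t : Fin T => (h t).1 = a).card

/-- Bernoulli observation pmf with means `m`. -/
def bern (m : α → ℝ) : α → Bool → ℝ := fun a x => if x then m a else 1 - m a

lemma histProb_nonneg [Fintype α] (T : ℕ)
    (π : (t : ℕ) → (Fin t → α × Bool) → α → ℝ) (ν : α → Bool → ℝ)
    (hπ0 : ∀ t hist a, 0 ≤ π t hist a) (hν0 : ∀ a x, 0 ≤ ν a x)
    (h : Fin T → α × Bool) : 0 ≤ histProb T π ν h :=
  Finset.prod_nonneg fun t _ => mul_nonneg (hπ0 _ _ _) (hν0 _ _)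

lemma histProb_succ [Fintype α] (T : ℕ)
    (π : (t : ℕ) → (Fin t → α × Bool) → α → ℝ) (ν : α → Bool → ℝ)
    (x : α × Bool) (g : Fin T → α × Bool) :
    histProb (T + 1) π ν (Fin.cons x g) =
      (π 0 (fun s : Fin 0 => s.elim0) x.1 * ν x.1 x.2) *
        histProb T (fun t hist => π (t + 1) (Fin.cons x hist)) ν g := by
  unfold histProb
  rw [Fin.prod_univ_succ]
  congr 1
  · simp only [Fin.cons_zero]
    congr 1
    exact congrArg (fun f => π 0 f x.1) (funext fun s => s.elim0)
  · apply Finset.prod_congr rfl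
    intro t _
    simp only [Fin.cons_succ]
    congr 2
    funext s
    induction s using Fin.cases with
    | zero => exact @Fin.cons_zero T (fun _ => α × Bool) x g
    | succ j => exact @Fin.cons_succ T (fun _ => α × Bool) x g ⟨j.1, j.2.trans t.2⟩

lemma sum_histProb [Fintype α] (ν : α → Bool → ℝ)
    (hν : ∀ a, ν a true + ν a false = 1) :
    ∀ (T : ℕ) (π : (t : ℕ) → (Fin t → α × Bool) → α → ℝ),
      (∀ t hist, ∑ a, π t hist a = 1) →
      ∑ h : Fin T → α × Bool, histProb T π ν h = 1 := by
  intro T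
  induction T with
  | zero =>
    intro π hπ
    rw [Fintype.sum_subsingleton _ (fun s : Fin 0 => s.elim0)]
    simp [histProb]
  | succ T ih =>
    intro π hπ
    rw [← Equiv.sum_comp (Fin.consEquiv (fun _ : Fin (T+1) => α × Bool))
      (histProb (T + 1) π ν), Fintype.sum_prod_type]
    have : ∀ x : α × Bool,
        ∑ g : Fin T → α × Bool,
          histProb (T + 1) π ν ((Fin.consEquiv (fun _ : Fin (T+1) => α × Bool)) (x, g)) =
        π 0 (fun s : Fin 0 => s.elim0) x.1 * ν x.1 x.2 := by
      intro x
      have : ∀ g : Fin T → α × Bool,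
          histProb (T + 1) π ν ((Fin.consEquiv (fun _ : Fin (T+1) => α × Bool)) (x, g)) =
          (π 0 (fun s : Fin 0 => s.elim0) x.1 * ν x.1 x.2) *
            histProb T (fun t hist => π (t + 1) (Fin.cons x hist)) ν g := by
        intro g
        exact histProb_succ T π ν x g
      rw [Finset.sum_congr rfl fun g _ => this g, ← Finset.mul_sum,
        ih (fun t hist => π (t + 1) (Fin.cons x hist)) (fun t hist => hπ (t + 1) _),
        mul_one]
    rw [Finset.sum_congr rfl fun x _ => this x, Fintype.sum_prod_type]
    have : ∀ a : α, ∑ b : Bool, π 0 (fun s : Fin 0 => s.elim0) a * ν a b =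
        π 0 (fun s : Fin 0 => s.elim0) a := by
      intro a
      rw [Fintype.sum_bool, ← mul_add, hν a, mul_one]
    rw [Finset.sum_congr rfl fun a _ => this a, hπ 0 _]

lemma key_bound [Fintype α] {T : ℕ} (P g : (Fin T → α × Bool) → ℝ) (c : ℝ)
    (hP0 : ∀ h, 0 ≤ P h) (hg0 : ∀ h, 0 ≤ g h)
    (s : Finset (Fin T → α × Bool)) (hgc : ∀ h ∈ s, c ≤ g h) :
    c * ∑ h ∈ s, P h ≤ ∑ h : Fin T → α × Bool, P h * g h := by
  calc c * ∑ h ∈ s, P h = ∑ h ∈ s, P h * c := by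
        rw [Finset.mul_sum]; exact Finset.sum_congr rfl fun h _ => mul_comm c (P h)
    _ ≤ ∑ h ∈ s, P h * g h :=
        Finset.sum_le_sum fun h hh => mul_le_mul_of_nonneg_left (hgc h hh) (hP0 h)
    _ ≤ ∑ h : Fin T → α × Bool, P h * g h :=
        Finset.sum_le_sum_of_subset_of_nonneg (Finset.subset_univ s)
          (fun h _ _ => mul_nonneg (hP0 h) (hg0 h))

lemma sum_means [Fintype α] [DecidableEq α] {T : ℕ} (m : α → ℝ) (a1 a0 : α)
    (hne : a1 ≠ a0) (c d : ℝ) (hm1 : m a1 = 1/2 + c) (hm0 : m a0 = 1/2 + d)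
    (hm : ∀ a, a ≠ a1 → a ≠ a0 → m a = 1/2) (h : Fin T → α × Bool) :
    ∑ t : Fin T, m (h t).1
      = (T : ℝ) * (1/2) + c * numPlays T h a1 + d * numPlays T h a0 := by
  have hrw : ∀ a, m a = 1/2 + (if a = a1 then c else 0) + (if a = a0 then d else 0) := by
    intro a
    by_cases h1 : a = a1
    · subst h1; simp [hm1, hne]
    · by_cases h0 : a = a0
      · subst h0; simp [hm0, h1]
      · simp [hm a h1 h0, h1, h0]
  rw [Finset.sum_congr rfl fun t _ => hrw ((h t).1)]
  rw [Finset.sum_add_distrib, Finset.sum_add_distrib, Finset.sum_const]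
  have e1 : ∑ t : Fin T, (if (h t).1 = a1 then c else 0) = c * numPlays T h a1 := by
    rw [← Finset.sum_filter, Finset.sum_const, numPlays, nsmul_eq_mul, mul_comm]
  have e0 : ∑ t : Fin T, (if (h t).1 = a0 then d else 0) = d * numPlays T h a0 := by
    rw [← Finset.sum_filter, Finset.sum_const, numPlays, nsmul_eq_mul, mul_comm]
  rw [e1, e0]
  simp [mul_comm]

lemma numPlays_le [Fintype α] [DecidableEq α] {T : ℕ} (h : Fin T → α × Bool) (a : α) :
    numPlays T h a ≤ T := by
  simpa [numPlays] using (Finset.card_filter_le Finset.univ fun t : Fin T => (h t).1 = a)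

lemma numPlays_add_le [Fintype α] [DecidableEq α] {T : ℕ} (h : Fin T → α × Bool)
    {a b : α} (hab : a ≠ b) : numPlays T h a + numPlays T h b ≤ T := by
  classical
  have hd : Disjoint (Finset.univ.filter fun t : Fin T => (h t).1 = a)
      (Finset.univ.filter fun t : Fin T => (h t).1 = b) := by
    rw [Finset.disjoint_filter]
    intro t _ h1 h2
    exact hab (h1 ▸ h2 ▸ rfl)
  have := Finset.card_union_of_disjoint hd
  have hle := Finset.card_le_univ
    ((Finset.univ.filter fun t : Fin T => (h t).1 = a) ∪
      (Finset.univ.filter fun t : Fin T => (h t).1 = b))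
  simp only [Fintype.card_fin] at hle
  unfold numPlays
  omega

/-- Two-environment regret lower bound: for the base Bernoulli environment with
`μ(1) = 1/2 + Δ` and all other means `1/2`, and the alternative with additionally
`μ(a₀) = 1/2 + 2Δ`, any policy satisfies
`R_T(ν,π) + R_T(ν^{a₀},π) ≥ (TΔ/2)·P_ν[N_T(1) ≤ T/2] + (TΔ/2)·P_{ν^{a₀}}[N_T(1) > T/2]`. -/
theorem two_environment_regret_bound [Fintype α] [DecidableEq α]
    (a1 a0 : α) (hne : a0 ≠ a1) (Δ : ℝ) (hΔ : 0 < Δ) (hΔ4 : Δ ≤ 1 / 4)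
    (T : ℕ) (π : (t : ℕ) → (Fin t → α × Bool) → α → ℝ)
    (hπ0 : ∀ t hist a, 0 ≤ π t hist a) (hπ1 : ∀ t hist, ∑ a, π t hist a = 1)
    (mbase malt : α → ℝ)
    (hb1 : mbase a1 = 1 / 2 + Δ) (hb : ∀ a, a ≠ a1 → mbase a = 1 / 2)
    (ha1 : malt a1 = 1 / 2 + Δ) (ha0 : malt a0 = 1 / 2 + 2 * Δ)
    (ha : ∀ a, a ≠ a1 → a ≠ a0 → malt a = 1 / 2) :
    ((T : ℝ) * (1 / 2 + Δ) -
        ∑ h : Fin T → α × Bool,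
          histProb T π (bern mbase) h * ∑ t : Fin T, mbase (h t).1) +
      ((T : ℝ) * (1 / 2 + 2 * Δ) -
        ∑ h : Fin T → α × Bool,
          histProb T π (bern malt) h * ∑ t : Fin T, malt (h t).1) ≥
      ((T : ℝ) * Δ / 2) *
          (∑ h ∈ Finset.univ.filter
              (fun h : Fin T → α × Bool => 2 * numPlays T h a1 ≤ T),
            histProb T π (bern mbase) h) +
        ((T : ℝ) * Δ / 2) *
          (∑ h ∈ Finset.univ.filter
              (fun h : Fin T → α × Bool => T < 2 * numPlays T h a1),
            histProb T π (bern malt) h) := by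
  have hbsum : ∀ a, bern mbase a true + bern mbase a false = 1 := by
    intro a; simp [bern]
  have hasum : ∀ a, bern malt a true + bern malt a false = 1 := by
    intro a; simp [bern]
  have hb01 : ∀ a, 0 ≤ mbase a ∧ mbase a ≤ 1 := by
    intro a
    by_cases h1 : a = a1
    · subst h1; rw [hb1]; constructor <;> linarith
    · rw [hb a h1]; norm_num
  have ha01 : ∀ a, 0 ≤ malt a ∧ malt a ≤ 1 := by
    intro a
    by_cases h1 : a = a1
    · subst h1; rw [ha1]; constructor <;> linarith
    · by_cases h0 : a = a0
      · subst h0; rw [ha0]; constructor <;> linarith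
      · rw [ha a h1 h0]; norm_num
  have hbν0 : ∀ a x, 0 ≤ bern mbase a x := by
    intro a x; cases x <;> simp [bern] <;> [linarith [(hb01 a).2]; exact (hb01 a).1]
  have haν0 : ∀ a x, 0 ≤ bern malt a x := by
    intro a x; cases x <;> simp [bern] <;> [linarith [(ha01 a).2]; exact (ha01 a).1]
  set P := histProb T π (bern mbase) with hP
  set Q := histProb T π (bern malt) with hQ
  have hP0 : ∀ h, 0 ≤ P h := fun h => histProb_nonneg T π _ hπ0 hbν0 h
  have hQ0 : ∀ h, 0 ≤ Q h := fun h => histProb_nonneg T π _ hπ0 haν0 h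
  have hPsum : ∑ h : Fin T → α × Bool, P h = 1 := sum_histProb _ hbsum T π hπ1
  have hQsum : ∑ h : Fin T → α × Bool, Q h = 1 := sum_histProb _ hasum T π hπ1
  have hSb : ∀ h : Fin T → α × Bool, ∑ t : Fin T, mbase (h t).1
      = (T : ℝ) * (1/2) + Δ * numPlays T h a1 + 0 * numPlays T h a0 :=
    sum_means mbase a1 a0 hne.symm Δ 0 (by rw [hb1])
      (by rw [hb a0 hne]; ring) (fun a h1 _ => hb a h1)
  have hSa : ∀ h : Fin T → α × Bool, ∑ t : Fin T, malt (h t).1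
      = (T : ℝ) * (1/2) + Δ * numPlays T h a1 + (2 * Δ) * numPlays T h a0 :=
    sum_means malt a1 a0 hne.symm Δ (2 * Δ) (by rw [ha1]) (by rw [ha0]) ha
  -- rewrite regrets as expectations
  have hrb : ∑ h : Fin T → α × Bool, P h * ((T : ℝ) * (1 / 2 + Δ) - ∑ t : Fin T, mbase (h t).1)
      = (T : ℝ) * (1 / 2 + Δ) - ∑ h : Fin T → α × Bool, P h * ∑ t : Fin T, mbase (h t).1 := by
    rw [Finset.sum_congr rfl fun h _ =>
        mul_sub (P h) ((T : ℝ) * (1 / 2 + Δ)) (∑ t : Fin T, mbase (h t).1),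
      Finset.sum_sub_distrib, ← Finset.sum_mul, hPsum, one_mul]
  have hra : ∑ h : Fin T → α × Bool,
        Q h * ((T : ℝ) * (1 / 2 + 2 * Δ) - ∑ t : Fin T, malt (h t).1)
      = (T : ℝ) * (1 / 2 + 2 * Δ) - ∑ h : Fin T → α × Bool, Q h * ∑ t : Fin T, malt (h t).1 := by
    rw [Finset.sum_congr rfl fun h _ =>
        mul_sub (Q h) ((T : ℝ) * (1 / 2 + 2 * Δ)) (∑ t : Fin T, malt (h t).1),
      Finset.sum_sub_distrib, ← Finset.sum_mul, hQsum, one_mul]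
  rw [← hrb, ← hra]
  have hbound1 : ((T : ℝ) * Δ / 2) *
      (∑ h ∈ Finset.univ.filter (fun h : Fin T → α × Bool => 2 * numPlays T h a1 ≤ T), P h)
      ≤ ∑ h : Fin T → α × Bool,
          P h * ((T : ℝ) * (1 / 2 + Δ) - ∑ t : Fin T, mbase (h t).1) := by
    apply key_bound _ _ _ hP0
    · intro h
      rw [hSb h]
      have hN : (numPlays T h a1 : ℝ) ≤ (T : ℝ) := by exact_mod_cast numPlays_le h a1
      nlinarith [hΔ.le]
    · intro h hh
      rw [Finset.mem_filter] at hh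
      have hN : 2 * (numPlays T h a1 : ℝ) ≤ (T : ℝ) := by exact_mod_cast hh.2
      rw [hSb h]
      nlinarith [hΔ.le]
  have hbound2 : ((T : ℝ) * Δ / 2) *
      (∑ h ∈ Finset.univ.filter (fun h : Fin T → α × Bool => T < 2 * numPlays T h a1), Q h)
      ≤ ∑ h : Fin T → α × Bool,
          Q h * ((T : ℝ) * (1 / 2 + 2 * Δ) - ∑ t : Fin T, malt (h t).1) := by
    apply key_bound _ _ _ hQ0
    · intro h
      rw [hSa h]
      have hN : (numPlays T h a1 : ℝ) + (numPlays T h a0 : ℝ) ≤ (T : ℝ) := by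
        exact_mod_cast numPlays_add_le h hne.symm
      have hN1 : (0 : ℝ) ≤ (numPlays T h a1 : ℝ) := Nat.cast_nonneg _
      nlinarith [hΔ.le]
    · intro h hh
      rw [Finset.mem_filter] at hh
      have hN : (T : ℝ) < 2 * (numPlays T h a1 : ℝ) := by exact_mod_cast hh.2
      have hN' : (numPlays T h a1 : ℝ) + (numPlays T h a0 : ℝ) ≤ (T : ℝ) := by
        exact_mod_cast numPlays_add_le h hne.symm
      rw [hSa h]
      nlinarith [hΔ.le]
  exact add_le_add hbound1 hbound2
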